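/- Let q ≥ 2 and let G be the thin headless spider of order q: the graph on vertices u₁, …, u_q, v₁, …, v_q where {u₁, …, u_q} is a clique, {v₁, …, v_q} is a stable set, and the only edges between the two sets are (u_i, v_i) for i ∈ {1, …, q}. Then η(G) = ⌈(q + 1)/2⌉. -/

import Mathlib

open Classical in
/-- Sum of the labels `f` over the open neighborhood of `v` in `G`. -/
noncomputable def nbrSum {V : Type*} [Fintype V] (G : SimpleGraph V) (f : V → ℕ) (v : V) : ℕ :=
  ∑ w ∈ Finset.univ.filter (fun w => G.Adj v w), f w

open Classical in
/-- The degree of `v` in `G`. -/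
noncomputable def deg {V : Type*} [Fintype V] (G : SimpleGraph V) (v : V) : ℕ :=
  (Finset.univ.filter (fun w => G.Adj v w)).card

/-- `f : V → {1,…,k}` is an additive `k`-coloring of `G`: labels lie in `{1,…,k}` and
adjacent vertices get distinct open-neighborhood sums. -/
def IsAdditiveColoring {V : Type*} [Fintype V] (G : SimpleGraph V) (k : ℕ) (f : V → ℕ) : Prop :=
  (∀ v, 1 ≤ f v ∧ f v ≤ k) ∧ ∀ u v, G.Adj u v → nbrSum G f u ≠ nbrSum G f v

/-- The additive chromatic number `η(G)`: the least `k` admitting an additive `k`-coloring. -/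
noncomputable def eta {V : Type*} [Fintype V] (G : SimpleGraph V) : ℕ :=
  sInf {k | ∃ f : V → ℕ, IsAdditiveColoring G k f}

/-- The thin headless spider of order `q`: `Sum.inl i` is the clique vertex `uᵢ`,
`Sum.inr i` is the stable-set vertex `vᵢ`, and `uᵢ` is adjacent to `vⱼ` iff `i = j`. -/
def thinSpider (q : ℕ) : SimpleGraph (Fin q ⊕ Fin q) where
  Adj x y :=
    match x, y with
    | Sum.inl i, Sum.inl j => i ≠ j
    | Sum.inl i, Sum.inr j => i = j
    | Sum.inr i, Sum.inl j => i = j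
    | Sum.inr _, Sum.inr _ => False
  symm := by
    constructor
    rintro (i | i) (j | j) h
    · exact fun e => h e.symm
    · exact h.symm
    · exact h.symm
    · exact h.elim
  loopless := by
    constructor
    rintro (i | i) h
    · exact h rfl
    · exact h


lemma nbrSum_inr' (q : ℕ) (f : Fin q ⊕ Fin q → ℕ) (i : Fin q) :
    nbrSum (thinSpider q) f (Sum.inr i) = f (Sum.inl i) := by
  classical
  unfold nbrSum
  rw [show (Finset.univ.filter (fun w => (thinSpider q).Adj (Sum.inr i) w)) = {Sum.inl i} by
    ext (j | j) <;> simp only [Finset.mem_filter] <;> simp [thinSpider, eq_comm]]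
  simp

lemma nbrSum_inl' (q : ℕ) (f : Fin q ⊕ Fin q → ℕ) (i : Fin q) :
    nbrSum (thinSpider q) f (Sum.inl i) =
      (∑ j ∈ Finset.univ.erase i, f (Sum.inl j)) + f (Sum.inr i) := by
  classical
  unfold nbrSum
  rw [Finset.sum_filter, Fintype.sum_sum_type]
  congr 1
  · rw [← Finset.sum_filter]
    congr 1
    ext j
    simp only [Finset.mem_filter]
    simp [thinSpider, ne_comm, eq_comm]
  · have h : ∀ j, (thinSpider q).Adj (Sum.inl i) (Sum.inr j) ↔ i = j := fun j => Iff.rfl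
    simp only [h]
    rw [Finset.sum_ite_eq]; simp

lemma cross_ne (q : ℕ) {k : ℕ} {f : Fin q ⊕ Fin q → ℕ}
    (hf : IsAdditiveColoring (thinSpider q) k f) {i j : Fin q} (hij : i ≠ j) :
    f (Sum.inl j) + f (Sum.inr i) ≠ f (Sum.inl i) + f (Sum.inr j) := by
  classical
  intro heq
  have hadj : (thinSpider q).Adj (Sum.inl i) (Sum.inl j) := hij
  have hne := hf.2 _ _ hadj
  rw [nbrSum_inl', nbrSum_inl'] at hne
  have hSi : (∑ l ∈ Finset.univ.erase i, f (Sum.inl l)) + f (Sum.inl i)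
      = ∑ l, f (Sum.inl l) := Finset.sum_erase_add _ _ (Finset.mem_univ i)
  have hSj : (∑ l ∈ Finset.univ.erase j, f (Sum.inl l)) + f (Sum.inl j)
      = ∑ l, f (Sum.inl l) := Finset.sum_erase_add _ _ (Finset.mem_univ j)
  omega

/-- The thin headless spider of order `q ≥ 2` satisfies `η(G) = ⌈(q + 1)/2⌉`. -/
theorem eta_thinSpider (q : ℕ) (hq : 2 ≤ q) :
    eta (thinSpider q) = (q + 1) ⌈/⌉ 2 := by
  classical
  set K := (q + 1) ⌈/⌉ 2 with hKdef
  have hK : K = (q + 2) / 2 := by rw [hKdef, Nat.ceilDiv_eq_add_pred_div]; omega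
  -- the coloring
  set f : Fin q ⊕ Fin q → ℕ :=
    Sum.elim (fun i => if (i : ℕ) < K then 1 else (i : ℕ) - K + 2)
      (fun i => if (i : ℕ) < K then (i : ℕ) + 1 else 1) with hfdef
  have hfl : ∀ i : Fin q, f (Sum.inl i) = if (i : ℕ) < K then 1 else (i : ℕ) - K + 2 :=
    fun i => rfl
  have hfr : ∀ i : Fin q, f (Sum.inr i) = if (i : ℕ) < K then (i : ℕ) + 1 else 1 :=
    fun i => rfl
  have hbound : ∀ v, 1 ≤ f v ∧ f v ≤ K := by
    rintro (i | i) <;> [rw [hfl]; rw [hfr]] <;> have := i.isLt <;> split <;> omega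
  have hAi : ∀ i : Fin q, q - 1 ≤ ∑ l ∈ Finset.univ.erase i, f (Sum.inl l) := by
    intro i
    have h1 : (Finset.univ.erase i).card • 1 ≤ ∑ l ∈ Finset.univ.erase i, f (Sum.inl l) :=
      Finset.card_nsmul_le_sum _ _ _ (fun x _ => (hbound (Sum.inl x)).1)
    simp only [smul_eq_mul, mul_one] at h1
    have h2 : (Finset.univ.erase i).card = q - 1 := by
      rw [Finset.card_erase_of_mem (Finset.mem_univ i)]
      simp
    omega
  have main : ∀ i : Fin q, nbrSum (thinSpider q) f (Sum.inl i) ≠ nbrSum (thinSpider q) f (Sum.inr i) := by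
    intro i
    rw [nbrSum_inl', nbrSum_inr']
    have := hAi i
    have h1 := (hbound (Sum.inr i)).1
    have h2 : f (Sum.inl i) < q := by
      rw [hfl]; have := i.isLt; split <;> omega
    omega
  have hcol : IsAdditiveColoring (thinSpider q) K f := by
    refine ⟨hbound, ?_⟩
    rintro (i | i) (j | j) hadj
    · -- clique edge
      have hij : i ≠ j := hadj
      have hij' : (i : ℕ) ≠ (j : ℕ) := fun h => hij (Fin.ext h)
      rw [nbrSum_inl', nbrSum_inl']
      have hSi : (∑ l ∈ Finset.univ.erase i, f (Sum.inl l)) + f (Sum.inl i)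
          = ∑ l, f (Sum.inl l) := Finset.sum_erase_add _ _ (Finset.mem_univ i)
      have hSj : (∑ l ∈ Finset.univ.erase j, f (Sum.inl l)) + f (Sum.inl j)
          = ∑ l, f (Sum.inl l) := Finset.sum_erase_add _ _ (Finset.mem_univ j)
      have key : f (Sum.inl j) + f (Sum.inr i) ≠ f (Sum.inl i) + f (Sum.inr j) := by
        rw [hfl, hfl, hfr, hfr]
        have := i.isLt; have := j.isLt
        by_cases h1 : (i : ℕ) < K <;> by_cases h2 : (j : ℕ) < K <;>
          simp only [if_pos, if_neg, h1, h2, if_true, if_false] <;> omega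
      omega
    · have hij : i = j := hadj
      subst hij
      exact main i
    · have hij : i = j := hadj
      subst hij
      exact (main i).symm
    · exact hadj.elim
  have hmem : K ∈ {k | ∃ f : Fin q ⊕ Fin q → ℕ, IsAdditiveColoring (thinSpider q) k f} :=
    ⟨f, hcol⟩
  have hlb : ∀ k ∈ {k | ∃ f : Fin q ⊕ Fin q → ℕ, IsAdditiveColoring (thinSpider q) k f},
      K ≤ k := by
    rintro k ⟨g, hg⟩
    have hk1 : 1 ≤ k := by
      have := hg.1 (Sum.inl ⟨0, by omega⟩)
      omega
    set φ : Fin q → ℕ := fun i => g (Sum.inr i) + k - g (Sum.inl i) with hφ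
    have hmaps : ∀ i ∈ (Finset.univ : Finset (Fin q)), φ i ∈ Finset.Icc 1 (2 * k - 1) := by
      intro i _
      have h1 := hg.1 (Sum.inl i)
      have h2 := hg.1 (Sum.inr i)
      rw [Finset.mem_Icc]
      simp only [hφ]
      omega
    have hinj : Set.InjOn φ (Finset.univ : Finset (Fin q)) := by
      intro i _ j _ heq
      by_contra hne
      have h1 := hg.1 (Sum.inl i)
      have h2 := hg.1 (Sum.inr i)
      have h3 := hg.1 (Sum.inl j)
      have h4 := hg.1 (Sum.inr j)
      exact cross_ne q hg hne (by simp only [hφ] at heq; omega)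
    have hcard := Finset.card_le_card_of_injOn φ hmaps hinj
    rw [Finset.card_univ, Fintype.card_fin, Nat.card_Icc] at hcard
    omega
  exact le_antisymm (Nat.sInf_le hmem) (le_csInf ⟨K, hmem⟩ hlb)
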